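/- Define f, f' : 𝔽₂¹⁰ → 𝔽₂ by f(x) = x₁x₆ ⊕ x₂x₇ ⊕ x₃x₈ ⊕ x₄x₉ ⊕ x₅x₁₀ ⊕ x₁x₂x₃x₄x₅ and f'(x) = f(x) ⊕ x₄ ⊕ x₆ ⊕ x₈ ⊕ x₁₀ ⊕ x₁x₂ ⊕ x₂x₃ ⊕ x₁x₂x₃ ⊕ x₂x₄x₅ ⊕ x₁x₂x₄x₅ ⊕ x₂x₃x₄x₅, and define π, σ : 𝔽₂¹⁰ → 𝔽₂¹⁰ by π(x) = (x₁, x₂, x₃, x₄, x₁⊕x₅, x₁⊕x₁₀⊕x₂x₃⊕x₅⊕x₆, x₁x₃⊕x₇, x₁x₂⊕x₈, x₉, x₁⊕x₁₀) and σ(y) = y ⊕ (1, 0, 1, 0, y₁, y₁⊕y₁₀⊕y₂⊕y₂y₃⊕y₅, y₁⊕y₃⊕y₁y₃, y₂⊕y₁y₂, 1, 1⊕y₁). Then π and σ are bijections of 𝔽₂¹⁰ and f(π(x) ⊕ σ(y)) = f'(x ⊕ y) for all x, y ∈ 𝔽₂¹⁰; consequently the translation designs dev(D_f) and dev(D_{f'})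 are isomorphic. -/
import Mathlib


open Function

/-- The vector space `𝔽₂ⁿ`. -/
abbrev BV (n : ℕ) := Fin n → ZMod 2

/-- `f(x) = x₁x₆ ⊕ x₂x₇ ⊕ x₃x₈ ⊕ x₄x₉ ⊕ x₅x₁₀ ⊕ x₁x₂x₃x₄x₅` (coordinates are 0-indexed). -/
def fMM (x : BV 10) : ZMod 2 :=
  x 0 * x 5 + x 1 * x 6 + x 2 * x 7 + x 3 * x 8 + x 4 * x 9 +
    x 0 * x 1 * x 2 * x 3 * x 4

/-- `f'(x) = f(x) ⊕ x₄ ⊕ x₆ ⊕ x₈ ⊕ x₁₀ ⊕ x₁x₂ ⊕ x₂x₃ ⊕ x₁x₂x₃ ⊕ x₂x₄x₅ ⊕ x₁x₂x₄x₅ ⊕ x₂x₃x₄x₅`. -/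
def fMM' (x : BV 10) : ZMod 2 :=
  fMM x + x 3 + x 5 + x 7 + x 9 + x 0 * x 1 + x 1 * x 2 +
    x 0 * x 1 * x 2 + x 1 * x 3 * x 4 + x 0 * x 1 * x 3 * x 4 + x 1 * x 2 * x 3 * x 4

/-- The permutation `π` of `𝔽₂¹⁰`. -/
def piMM (x : BV 10) : BV 10 :=
  ![x 0, x 1, x 2, x 3, x 0 + x 4,
    x 0 + x 9 + x 1 * x 2 + x 4 + x 5,
    x 0 * x 2 + x 6, x 0 * x 1 + x 7, x 8, x 0 + x 9]

/-- The permutation `σ` of `𝔽₂¹⁰`. -/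
def sigmaMM (y : BV 10) : BV 10 :=
  y + ![1, 0, 1, 0, y 0,
        y 0 + y 9 + y 1 + y 1 * y 2 + y 4,
        y 0 + y 2 + y 0 * y 2, y 1 + y 0 * y 1, 1, 1 + y 0]


/-- Explicit inverse of `sigmaMM`. -/
def invSigmaMM (z : BV 10) : BV 10 :=
  ![z 0 + 1, z 1, z 2 + 1, z 3, z 0 + z 4 + 1,
    z 0 + z 9 + z 1 * z 2 + z 4 + z 5,
    z 0 * z 2 + z 6 + 1, z 0 * z 1 + z 7, z 8 + 1, z 0 + z 9]

lemma pi_invol : ∀ x : BV 10, piMM (piMM x) = x := by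
  have hv : ∀ a : ZMod 2, a * a = a := by decide
  have h2 : (2 : ZMod 2) = 0 := by decide
  intro x; funext i; fin_cases i
  · show (x 0 : ZMod 2) = x 0
    ring1
  · show (x 1 : ZMod 2) = x 1
    ring1
  · show (x 2 : ZMod 2) = x 2
    ring1
  · show (x 3 : ZMod 2) = x 3
    ring1
  · show ((x 0 + (x 0 + x 4)) : ZMod 2) = x 4
    linear_combination (norm := ring1) (x 0) * h2
  · show ((x 0 + (x 0 + x 9) + x 1 * x 2 + (x 0 + x 4) + (x 0 + x 9 + x 1 * x 2 + x 4 + x 5)) : ZMod 2) = x 5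
    linear_combination (norm := ring1) (x 9 + x 4 + x 1*x 2 + 2*x 0) * h2
  · show ((x 0 * x 2 + (x 0 * x 2 + x 6)) : ZMod 2) = x 6
    linear_combination (norm := ring1) (x 0*x 2) * h2
  · show ((x 0 * x 1 + (x 0 * x 1 + x 7)) : ZMod 2) = x 7
    linear_combination (norm := ring1) (x 0*x 1) * h2
  · show (x 8 : ZMod 2) = x 8
    ring1
  · show ((x 0 + (x 0 + x 9)) : ZMod 2) = x 9
    linear_combination (norm := ring1) (x 0) * h2
lemma sigma_inv1 : ∀ x : BV 10, sigmaMM (invSigmaMM x) = x := by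
  have hv : ∀ a : ZMod 2, a * a = a := by decide
  have h2 : (2 : ZMod 2) = 0 := by decide
  intro x; funext i; fin_cases i
  · show (((x 0 + 1) + 1) : ZMod 2) = x 0
    linear_combination (norm := ring1) (1) * h2
  · show ((x 1 + 0) : ZMod 2) = x 1
    ring1
  · show (((x 2 + 1) + 1) : ZMod 2) = x 2
    linear_combination (norm := ring1) (1) * h2
  · show ((x 3 + 0) : ZMod 2) = x 3
    ring1
  · show (((x 0 + x 4 + 1) + (x 0 + 1)) : ZMod 2) = x 4
    linear_combination (norm := ring1) (1 + x 0) * h2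
  · show (((x 0 + x 9 + x 1 * x 2 + x 4 + x 5) + ((x 0 + 1) + (x 0 + x 9) + x 1 + x 1 * (x 2 + 1) + (x 0 + x 4 + 1))) : ZMod 2) = x 5
    linear_combination (norm := ring1) (1 + x 9 + x 4 + x 1 + x 1*x 2 + 2*x 0) * h2
  · show (((x 0 * x 2 + x 6 + 1) + ((x 0 + 1) + (x 2 + 1) + (x 0 + 1) * (x 2 + 1))) : ZMod 2) = x 6
    linear_combination (norm := ring1) (2 + x 2 + x 0 + x 0*x 2) * h2
  · show (((x 0 * x 1 + x 7) + (x 1 + (x 0 + 1) * x 1)) : ZMod 2) = x 7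
    linear_combination (norm := ring1) (x 1 + x 0*x 1) * h2
  · show (((x 8 + 1) + 1) : ZMod 2) = x 8
    linear_combination (norm := ring1) (1) * h2
  · show (((x 0 + x 9) + (1 + (x 0 + 1))) : ZMod 2) = x 9
    linear_combination (norm := ring1) (1 + x 0) * h2
lemma sigma_inv2 : ∀ x : BV 10, invSigmaMM (sigmaMM x) = x := by
  have hv : ∀ a : ZMod 2, a * a = a := by decide
  have h2 : (2 : ZMod 2) = 0 := by decide
  intro x; funext i; fin_cases i
  · show (((x 0 + 1) + 1) : ZMod 2) = x 0
    linear_combination (norm := ring1) (1) * h2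
  · show ((x 1 + 0) : ZMod 2) = x 1
    ring1
  · show (((x 2 + 1) + 1) : ZMod 2) = x 2
    linear_combination (norm := ring1) (1) * h2
  · show ((x 3 + 0) : ZMod 2) = x 3
    ring1
  · show (((x 0 + 1) + (x 4 + x 0) + 1) : ZMod 2) = x 4
    linear_combination (norm := ring1) (1 + x 0) * h2
  · show (((x 0 + 1) + (x 9 + (1 + x 0)) + (x 1 + 0) * (x 2 + 1) + (x 4 + x 0) + (x 5 + (x 0 + x 9 + x 1 + x 1 * x 2 + x 4))) : ZMod 2) = x 5
    linear_combination (norm := ring1) (1 + x 9 + x 4 + x 1 + x 1*x 2 + 2*x 0) * h2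
  · show (((x 0 + 1) * (x 2 + 1) + (x 6 + (x 0 + x 2 + x 0 * x 2)) + 1) : ZMod 2) = x 6
    linear_combination (norm := ring1) (1 + x 2 + x 0 + x 0*x 2) * h2
  · show (((x 0 + 1) * (x 1 + 0) + (x 7 + (x 1 + x 0 * x 1))) : ZMod 2) = x 7
    linear_combination (norm := ring1) (x 1 + x 0*x 1) * h2
  · show (((x 8 + 1) + 1) : ZMod 2) = x 8
    linear_combination (norm := ring1) (1) * h2
  · show (((x 0 + 1) + (x 9 + (1 + x 0))) : ZMod 2) = x 9
    linear_combination (norm := ring1) (1 + x 0) * h2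

set_option maxHeartbeats 4000000 in
lemma key_identity : ∀ x y : BV 10, fMM (piMM x + sigmaMM y) = fMM' (x + y) := by
  intro x y
  have h0 : (piMM x + sigmaMM y) (0 : Fin 10) = (x 0) + (y 0 + (1)) := rfl
  have h1 : (piMM x + sigmaMM y) (1 : Fin 10) = (x 1) + (y 1 + (0)) := rfl
  have h2 : (piMM x + sigmaMM y) (2 : Fin 10) = (x 2) + (y 2 + (1)) := rfl
  have h3 : (piMM x + sigmaMM y) (3 : Fin 10) = (x 3) + (y 3 + (0)) := rfl
  have h4 : (piMM x + sigmaMM y) (4 : Fin 10) = (x 0 + x 4) + (y 4 + (y 0)) := rfl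
  have h5 : (piMM x + sigmaMM y) (5 : Fin 10) = (x 0 + x 9 + x 1 * x 2 + x 4 + x 5) + (y 5 + (y 0 + y 9 + y 1 + y 1 * y 2 + y 4)) := rfl
  have h6 : (piMM x + sigmaMM y) (6 : Fin 10) = (x 0 * x 2 + x 6) + (y 6 + (y 0 + y 2 + y 0 * y 2)) := rfl
  have h7 : (piMM x + sigmaMM y) (7 : Fin 10) = (x 0 * x 1 + x 7) + (y 7 + (y 1 + y 0 * y 1)) := rfl
  have h8 : (piMM x + sigmaMM y) (8 : Fin 10) = (x 8) + (y 8 + (1)) := rfl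
  have h9 : (piMM x + sigmaMM y) (9 : Fin 10) = (x 0 + x 9) + (y 9 + (1 + y 0)) := rfl
  have k0 : (x + y) (0 : Fin 10) = x 0 + y 0 := rfl
  have k1 : (x + y) (1 : Fin 10) = x 1 + y 1 := rfl
  have k2 : (x + y) (2 : Fin 10) = x 2 + y 2 := rfl
  have k3 : (x + y) (3 : Fin 10) = x 3 + y 3 := rfl
  have k4 : (x + y) (4 : Fin 10) = x 4 + y 4 := rfl
  have k5 : (x + y) (5 : Fin 10) = x 5 + y 5 := rfl
  have k6 : (x + y) (6 : Fin 10) = x 6 + y 6 := rfl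
  have k7 : (x + y) (7 : Fin 10) = x 7 + y 7 := rfl
  have k8 : (x + y) (8 : Fin 10) = x 8 + y 8 := rfl
  have k9 : (x + y) (9 : Fin 10) = x 9 + y 9 := rfl
  simp only [fMM, fMM', h0,h1,h2,h3,h4,h5,h6,h7,h8,h9,k0,k1,k2,k3,k4,k5,k6,k7,k8,k9]
  have hv : ∀ a : ZMod 2, a * a = a := by decide
  have h2 : (2 : ZMod 2) = 0 := by decide
  linear_combination (norm := ring1)
    ((2 + y 1*y 3 + y 1*y 2*y 3 + x 3*y 1 + x 3*y 1*y 2 + x 2*y 1*y 3 + x 2*x 3*y 1 + x 1*y 3 + x 1*y 2*y 3 + x 1*x 3 + x 1*x 3*y 2 + x 1*x 2*y 3 + x 1*x 2*x 3)) * hv (x 0) +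
    ((2 + y 1*y 3 + y 1*y 2*y 3 + x 3*y 1 + x 3*y 1*y 2 + x 2*y 1*y 3 + x 2*x 3*y 1 + x 1*y 3 + x 1*y 2*y 3 + x 1*x 3 + x 1*x 3*y 2 + x 1*x 2*y 3 + x 1*x 2*x 3)) * hv (y 0) +
    ((y 4 + y 1 + y 1*y 2 + 2*y 0 + y 0*y 9 + y 0*y 4 + y 0*y 1 + y 0*y 1*y 3 + y 0*y 1*y 2 + y 0*y 1*y 2*y 3 + x 9*y 0 + x 4 + x 4*y 0 + x 3*y 0*y 1 + x 3*y 0*y 1*y 2 + x 2*y 0*y 1*y 3 + x 2*x 3*y 0*y 1 + x 1*y 0*y 3 + x 1*y 0*y 2*y 3 + x 1*x 3*y 0 + x 1*x 3*y 0*y 2 + x 1*x 2*y 0*y 3 + x 1*x 2*x 3*y 0 + 2*x 0 + x 0*y 9 + x 0*y 4 + x 0*y 1*y 3 + x 0*y 1*y 2*y 3 + 2*x 0*y 0 + x 0*y 0*y 1*y 3 + x 0*y 0*y 1*y 2*y 3 + x 0*x 9 + x 0*x 4 + x 0*x 3*y 1 + x 0*x 3*y 1*y 2 + x 0*x 3*y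 0*y 1 + x 0*x 3*y 0*y 1*y 2 + x 0*x 2*y 1*y 3 + x 0*x 2*y 0*y 1*y 3 + x 0*x 2*x 3*y 1 + x 0*x 2*x 3*y 0*y 1 + x 0*x 1*y 3 + x 0*x 1*y 2*y 3 + x 0*x 1*y 0*y 3 + x 0*x 1*y 0*y 2*y 3 + x 0*x 1*x 3 + x 0*x 1*x 3*y 2 + x 0*x 1*x 3*y 0 + x 0*x 1*x 3*y 0*y 2 + x 0*x 1*x 2 + x 0*x 1*x 2*y 3 + x 0*x 1*x 2*y 0*y 3 + x 0*x 1*x 2*x 3 + x 0*x 1*x 2*x 3*y 0)) * h2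

theorem support_designs_of_fMM_fMM'_isomorphic :
    (Bijective piMM ∧ Bijective sigmaMM ∧
      ∀ x y : BV 10, fMM (piMM x + sigmaMM y) = fMM' (x + y)) ∧
    ∃ π σ : BV 10 → BV 10, Bijective π ∧ Bijective σ ∧
      ∀ x y : BV 10, fMM (π x + σ y) = fMM' (x + y) := by
  have hpi : Bijective piMM := Function.Involutive.bijective pi_invol
  have hsig : Bijective sigmaMM :=
    Function.bijective_iff_has_inverse.mpr ⟨invSigmaMM, sigma_inv2, sigma_inv1⟩
  exact ⟨⟨hpi, hsig, key_identity⟩, piMM, sigmaMM, hpi, hsig, key_identity⟩
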